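/- Let θ*_0,...,θ*_d be pairwise distinct elements of a field K with d odd, set m = (d-1)/2, and define τ*_i(λ) = ∏_{h=0}^{i-1}(λ - θ*_h). Then ∏_{1 ≤ i ≤ d, i odd} τ*_{i-1}(θ*_{i-1})/τ*_i(θ*_i) = (-1)^{m+1} ∏_{0 ≤ i < j ≤ d} (θ*_i - θ*_j)^{(-1)^j}. -/

import Mathlib

open Finset

lemma my_prod_neg {K : Type*} [Field K] (s : Finset ℕ) (f : ℕ → K) :
    ∏ i ∈ s, -f i = (-1 : K) ^ s.card * ∏ i ∈ s, f i := by
  rw [← Finset.prod_const, ← Finset.prod_mul_distrib]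
  exact Finset.prod_congr rfl (fun i _ => by ring)

lemma card_odd_range : ∀ m : ℕ, ((Finset.range (2*m+2)).filter (fun i => Odd i)).card = m+1 := by
  intro m
  induction m with
  | zero => decide
  | succ n ih =>
    have h1 : 2*(n+1)+2 = (2*n+2) + 1 + 1 := by ring
    rw [h1, Finset.range_add_one, Finset.range_add_one, Finset.filter_insert, Finset.filter_insert]
    have hodd : Odd (2*n+2+1) := ⟨n+1, by ring⟩
    have heven : ¬ Odd (2*n+2) := by simp [Nat.even_add_one, parity_simps]
    simp only [hodd, heven, if_true, if_false, if_pos, if_neg]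
    rw [Finset.card_insert_of_notMem (by simp)]
    omega

/-- product formula involving the τ polynomials. -/
theorem stmt16 {K : Type*} [Field K] (d : ℕ) (hodd : Odd d)
    (θ : ℕ → K)
    (hdist : ∀ i j : ℕ, i ≤ d → j ≤ d → θ i = θ j → i = j)
    (m : ℕ) (hm : m = (d - 1) / 2)
    (τ : ℕ → K → K)
    (hτ : ∀ i x, τ i x = ∏ h ∈ Finset.range i, (x - θ h)) :
    ∏ i ∈ (Finset.range (d+1)).filter (fun i => Odd i),
        τ (i-1) (θ (i-1)) / τ i (θ i)
      = (-1 : K) ^ (m+1) *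
        ∏ j ∈ Finset.range (d+1), ∏ i ∈ Finset.range j,
          (θ i - θ j) ^ ((-1 : ℤ) ^ j) := by
  obtain ⟨k, hk⟩ := hodd
  have hmk : m = k := by omega
  subst hmk
  subst hk
  set F : ℕ → K := fun j => ∏ h ∈ Finset.range j, (θ j - θ h) with hF
  have key : ∀ j, ∏ i ∈ Finset.range j, (θ i - θ j) ^ ((-1 : ℤ) ^ j)
      = if Even j then F j else -(F j)⁻¹ := by
    intro j
    have hneg : ∏ i ∈ Finset.range j, (θ i - θ j) = (-1 : K) ^ j * F j := by
      have : ∏ i ∈ Finset.range j, (θ i - θ j)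
          = ∏ i ∈ Finset.range j, -(θ j - θ i) :=
        Finset.prod_congr rfl (fun i _ => by ring)
      rw [this, my_prod_neg, Finset.card_range]
    rcases Nat.even_or_odd j with he | ho
    · rw [if_pos he, he.neg_one_pow]
      simp only [zpow_one]
      rw [hneg, he.neg_one_pow, one_mul]
    · rw [if_neg (by simpa [Nat.not_even_iff_odd] using ho), ho.neg_one_pow]
      simp only [zpow_neg, zpow_one]
      rw [Finset.prod_inv_distrib, hneg, ho.neg_one_pow, neg_one_mul, inv_neg]
  simp only [hτ]
  rw [Finset.prod_congr rfl (fun j _ => key j)]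
  rw [← Finset.prod_filter_mul_prod_filter_not (Finset.range (2*m+1+1)) (fun i => Odd i)]
  have hfe : (Finset.range (2*m+1+1)).filter (fun i => ¬ Odd i)
      = (Finset.range (2*m+1+1)).filter (fun i => Even i) := by
    ext i; simp [Nat.not_odd_iff_even]
  rw [hfe]
  have hodda : ∀ j ∈ (Finset.range (2*m+1+1)).filter (fun i => Odd i),
      (if Even j then F j else -(F j)⁻¹) = -(F j)⁻¹ := by
    intro j hj
    simp only [Finset.mem_filter] at hj
    rw [if_neg (by simpa [Nat.not_even_iff_odd] using hj.2)]
  have hevena : ∀ j ∈ (Finset.range (2*m+1+1)).filter (fun i => Even i),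
      (if Even j then F j else -(F j)⁻¹) = F j := by
    intro j hj
    simp only [Finset.mem_filter] at hj
    rw [if_pos hj.2]
  rw [Finset.prod_congr rfl hodda, Finset.prod_congr rfl hevena]
  have hcard : ((Finset.range (2*m+1+1)).filter (fun i => Odd i)).card = m+1 := by
    have h2 := card_odd_range m
    have : 2*m+1+1 = 2*m+2 := by ring
    rw [this]
    exact h2
  have hoddprod : ∏ j ∈ (Finset.range (2*m+1+1)).filter (fun i => Odd i), -(F j)⁻¹
      = (-1:K)^(m+1) * ∏ j ∈ (Finset.range (2*m+1+1)).filter (fun i => Odd i), (F j)⁻¹ := by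
    rw [my_prod_neg, hcard]
  rw [hoddprod]
  rw [Finset.prod_congr rfl (fun i _ => div_eq_mul_inv
    (∏ h ∈ Finset.range (i-1), (θ (i-1) - θ h)) (∏ h ∈ Finset.range i, (θ i - θ h))),
    Finset.prod_mul_distrib]
  have hbij : ∏ i ∈ (Finset.range (2*m+1+1)).filter (fun i => Odd i),
        ∏ h ∈ Finset.range (i-1), (θ (i-1) - θ h)
      = ∏ j ∈ (Finset.range (2*m+1+1)).filter (fun i => Even i), F j := by
    apply Finset.prod_nbij' (fun i => i - 1) (fun j => j + 1)
    · intro a ha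
      simp only [Finset.mem_filter, Finset.mem_range] at ha ⊢
      obtain ⟨h1, c, hc⟩ := ha
      exact ⟨by omega, ⟨c, by omega⟩⟩
    · intro a ha
      simp only [Finset.mem_filter, Finset.mem_range] at ha ⊢
      obtain ⟨h1, c, hc⟩ := ha
      exact ⟨by omega, ⟨c, by omega⟩⟩
    · intro a ha
      simp only [Finset.mem_filter] at ha
      obtain ⟨_, c, hc⟩ := ha
      omega
    · intro a _
      omega
    · intro a _
      rfl
  rw [hbij]
  have hsame : ∏ x ∈ (Finset.range (2*m+1+1)).filter (fun i => Odd i),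
      (∏ h ∈ Finset.range x, (θ x - θ h))⁻¹
      = ∏ x ∈ (Finset.range (2*m+1+1)).filter (fun i => Odd i), (F x)⁻¹ := rfl
  rw [hsame]
  set P := ∏ j ∈ (Finset.range (2*m+1+1)).filter (fun i => Odd i), (F j)⁻¹
  set Q := ∏ j ∈ (Finset.range (2*m+1+1)).filter (fun i => Even i), F j
  have hsq : (1 : K) = (-1:K)^(m+1) * (-1:K)^(m+1) := by
    rw [← pow_add, ← two_mul, pow_mul]
    norm_num
  linear_combination P * Q * hsq
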